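/- Let M be a compact metric space equipped with a continuous flow φ, let f₀ : M → ℝ/ℤ be a continuous map not homotopic to a constant map, and let N, π, T, ψ be as in the covering construction. Let F : N → ℝ be continuous, ℤ-equivariant, and strictly increasing along the flow everywhere: F(ψ_s(y)) < F(ψ_{s′}(y)) for all y ∈ N and all s < s′. Then for every y ∈ N and every c ∈ ℝ there is exactly one s ∈ ℝ with F(ψ_s(y)) = c. Consequently, π(F⁻¹({c})) meets every orbit of φ, i.e. it is a global cross-section. (This is the key step in the paper's proof of Fried's theorem in the general continuous setting.) -/

import Mathlib

/-- The ℤ-cover of `M` associated with a circle-valued map `f₀`: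
`N = {(x,t) ∈ M × ℝ : f₀ x = t mod 1}`, with the subspace topology. -/
abbrev ZCover {M : Type*} [MetricSpace M] (f₀ : M → AddCircle (1:ℝ)) : Type _ :=
  {p : M × ℝ // f₀ p.1 = (p.2 : AddCircle (1:ℝ))}

/-- The covering projection `π : N → M`. -/
def zProj {M : Type*} [MetricSpace M] (f₀ : M → AddCircle (1:ℝ)) : ZCover f₀ → M :=
  fun y => y.val.1

/-- The deck transformation `T : N → N`, `(x,t) ↦ (x, t+1)`. -/
def zDeck {M : Type*} [MetricSpace M] (f₀ : M → AddCircle (1:ℝ)) : ZCover f₀ → ZCover f₀ :=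
  fun y => ⟨(y.val.1, y.val.2 + 1), by
    have h := y.prop
    simpa [AddCircle.coe_add_period 1 y.val.2] using h⟩

/-- A level-set cross-section for `f₀`: the injective image in `M` of a level set
`F⁻¹ {c}` of a continuous ℤ-equivariant function `F` on the ℤ-cover which is
strictly increasing along the lifted flow `ψ` on an open set containing the level set. -/
def IsLevelSetCS {M : Type*} [MetricSpace M] (f₀ : M → AddCircle (1:ℝ))
    (ψ : ℝ → ZCover f₀ → ZCover f₀) (S : Set M) : Prop :=
  ∃ (F : ZCover f₀ → ℝ) (c : ℝ) (U : Set (ZCover f₀)),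
    Continuous F ∧ (∀ y, F (zDeck f₀ y) = F y + 1) ∧
    (F ⁻¹' {c}).Nonempty ∧ IsOpen U ∧ F ⁻¹' {c} ⊆ U ∧
    (∀ (y : ZCover f₀) (s s' : ℝ), s < s' → (∀ u ∈ Set.Icc s s', ψ u y ∈ U) →
      F (ψ s y) < F (ψ s' y)) ∧
    S = zProj f₀ '' (F ⁻¹' {c})

/-- **Level sets of everywhere increasing equivariant functions are global cross-sections.**
Let `M` be a compact metric space with a continuous flow `φ`, `f₀ : M → ℝ/ℤ` continuous
and not homotopic to a constant, and `F` a continuous ℤ-equivariant function on the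
ℤ-cover which is strictly increasing along the lifted flow everywhere. Then for every
`y` in the cover and every `c ∈ ℝ` there is exactly one `s` with `F (ψ s y) = c`;
consequently, for every `c`, the projected level set `π (F⁻¹ {c})` meets every orbit. -/
theorem levelSet_global_crossSection
    {M : Type*} [MetricSpace M] [CompactSpace M]
    (f₀ : M → AddCircle (1:ℝ)) (hf₀ : Continuous f₀)
    (hnc : ¬ ∃ c : AddCircle (1:ℝ),
      ContinuousMap.Homotopic ⟨f₀, hf₀⟩ (ContinuousMap.const M c))
    (φ : ℝ → M → M)
    (hφc : Continuous fun p : ℝ × M => φ p.1 p.2)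
    (hφ0 : ∀ x : M, φ 0 x = x)
    (hφadd : ∀ (s t : ℝ) (x : M), φ (s + t) x = φ s (φ t x))
    (ψ : ℝ → ZCover f₀ → ZCover f₀)
    (hψc : Continuous fun p : ℝ × ZCover f₀ => ψ p.1 p.2)
    (hψ0 : ∀ y : ZCover f₀, ψ 0 y = y)
    (hψadd : ∀ (s t : ℝ) (y : ZCover f₀), ψ (s + t) y = ψ s (ψ t y))
    (hlift : ∀ (s : ℝ) (y : ZCover f₀), zProj f₀ (ψ s y) = φ s (zProj f₀ y))
    (hdeck : ∀ (s : ℝ) (y : ZCover f₀), ψ s (zDeck f₀ y) = zDeck f₀ (ψ s y))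
    (F : ZCover f₀ → ℝ) (hFc : Continuous F)
    (hFeq : ∀ y : ZCover f₀, F (zDeck f₀ y) = F y + 1)
    (hmono : ∀ (y : ZCover f₀) (s s' : ℝ), s < s' → F (ψ s y) < F (ψ s' y)) :
    (∀ (y : ZCover f₀) (c : ℝ), ∃! s : ℝ, F (ψ s y) = c) ∧
      ∀ (c : ℝ) (x : M), ∃ s : ℝ, φ s x ∈ zProj f₀ '' (F ⁻¹' {c}) := by
  classical
  -- continuity of s ↦ F (ψ s y)
  have hcont : ∀ y : ZCover f₀, Continuous fun s => F (ψ s y) :=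
    fun y => hFc.comp (hψc.comp (continuous_id.prodMk continuous_const))
  have huniq : ∀ (y : ZCover f₀) (c : ℝ) (s s' : ℝ),
      F (ψ s y) = c → F (ψ s' y) = c → s = s' := by
    intro y c s s' hs hs'
    by_contra hne
    rcases lt_or_gt_of_ne hne with h | h
    · exact absurd (hs.trans hs'.symm) (ne_of_lt (hmono y s s' h))
    · exact absurd (hs'.trans hs.symm) (ne_of_lt (hmono y s' s h))
  rcases isEmpty_or_nonempty M with hM | hM
  · exact ⟨fun y => isEmptyElim y.val.1, fun c x => isEmptyElim x⟩
  -- integer shift lemma for AddCircle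
  have hshift : ∀ (t : ℝ) (n : ℤ), ((t - n : ℝ) : AddCircle (1:ℝ)) = (t : AddCircle (1:ℝ)) := by
    intro t n
    have h : ((n:ℝ) : AddCircle (1:ℝ)) = 0 := by
      rw [AddCircle.coe_eq_zero_iff]; exact ⟨n, by simp⟩
    rw [show ((t - n : ℝ) : AddCircle (1:ℝ))
        = (t:AddCircle (1:ℝ)) - ((n:ℝ):AddCircle (1:ℝ)) from QuotientAddGroup.mk_sub _ _ _,
      h, sub_zero]
  -- the progress function
  set g : ZCover f₀ → ℝ := fun z => F (ψ 1 z) - F z with hg_def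
  have hg_pos : ∀ z, 0 < g z := by
    intro z
    have := hmono z 0 1 one_pos
    rw [hψ0] at this
    simpa [hg_def] using sub_pos.mpr this
  have hg_cont : Continuous g :=
    (hFc.comp (hψc.comp (continuous_const.prodMk continuous_id))).sub hFc
  have hg_deck : ∀ z, g (zDeck f₀ z) = g z := by
    intro z
    simp only [hg_def, hdeck 1 z, hFeq]
    ring
  -- iterates of the deck transformation
  have hiterval : ∀ (k : ℕ) (z : ZCover f₀),
      ((zDeck f₀)^[k] z).val = (z.val.1, z.val.2 + k) := by
    intro k
    induction k with
    | zero => intro z; simp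
    | succ k ih =>
      intro z
      rw [Function.iterate_succ_apply', zDeck]
      simp only [ih z]
      push_cast
      rw [add_assoc]
  have hg_iter : ∀ (k : ℕ) (z : ZCover f₀), g ((zDeck f₀)^[k] z) = g z := by
    intro k
    induction k with
    | zero => intro z; simp
    | succ k ih =>
      intro z
      rw [Function.iterate_succ_apply', hg_deck, ih]
  -- reduction to the fundamental slab
  have hred : ∀ z : ZCover f₀, ∃ w : ZCover f₀,
      w.val.2 ∈ Set.Icc (0:ℝ) 1 ∧ g w = g z := by
    intro z
    set t := z.val.2 with ht_def
    set n : ℤ := ⌊t⌋ with hn_def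
    have hwmem : f₀ z.val.1 = ((t - n : ℝ) : AddCircle (1:ℝ)) := by
      rw [hshift t n]; exact z.prop
    refine ⟨⟨(z.val.1, t - n), hwmem⟩, ?_, ?_⟩
    · constructor
      · simpa [hn_def] using (Int.fract_nonneg t)
      · have := Int.fract_lt_one t
        simp only [Int.fract] at this
        exact le_of_lt (by simpa [hn_def] using this)
    · rcases le_or_gt 0 n with hn | hn
      · have hk : ((n.toNat : ℝ)) = (n : ℝ) := by
          exact_mod_cast congrArg (Int.cast : ℤ → ℝ) (Int.toNat_of_nonneg hn)
        have heq : (zDeck f₀)^[n.toNat] ⟨(z.val.1, t - n), hwmem⟩ = z := by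
          apply Subtype.ext
          rw [hiterval]
          simp [hk, ht_def]
        rw [← hg_iter n.toNat ⟨(z.val.1, t - n), hwmem⟩, heq]
      · have hk : (((-n).toNat : ℝ)) = -(n : ℝ) := by
          have := Int.toNat_of_nonneg (by omega : (0:ℤ) ≤ -n)
          exact_mod_cast congrArg (Int.cast : ℤ → ℝ) this
        have heq : (zDeck f₀)^[(-n).toNat] z = ⟨(z.val.1, t - n), hwmem⟩ := by
          apply Subtype.ext
          rw [hiterval]
          simp [hk, ht_def, sub_eq_add_neg]
        rw [← hg_iter (-n).toNat z, heq]
  -- the fundamental slab is compact and nonempty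
  set K : Set (ZCover f₀) := {z | z.val.2 ∈ Set.Icc (0:ℝ) 1} with hK_def
  have hKc : IsCompact K := by
    rw [Topology.IsEmbedding.subtypeVal.isCompact_iff]
    have himg : Subtype.val '' K
        = {p : M × ℝ | f₀ p.1 = (p.2 : AddCircle (1:ℝ))} ∩ {p : M × ℝ | p.2 ∈ Set.Icc (0:ℝ) 1} := by
      ext p
      constructor
      · rintro ⟨z, hz, rfl⟩; exact ⟨z.prop, hz⟩
      · rintro ⟨h1, h2⟩; exact ⟨⟨p, h1⟩, h2, rfl⟩
    rw [himg]
    apply IsCompact.of_isClosed_subset (isCompact_univ.prod isCompact_Icc)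
    · exact (isClosed_eq (hf₀.comp continuous_fst)
        ((AddCircle.continuous_mk' 1).comp continuous_snd)).inter
        (isClosed_Icc.preimage continuous_snd)
    · rintro p ⟨-, h2⟩; exact ⟨Set.mem_univ _, h2⟩
  obtain ⟨x0⟩ := hM
  obtain ⟨t0, ht0⟩ : ∃ t0 : ℝ, (t0 : AddCircle (1:ℝ)) = f₀ x0 := Quotient.exists_rep (f₀ x0)
  obtain ⟨w1, hw1K, -⟩ := hred ⟨(x0, t0), ht0.symm⟩
  have hKne : K.Nonempty := ⟨w1, hw1K⟩
  -- uniform progress δ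
  obtain ⟨w0, hw0K, hw0min⟩ := hKc.exists_isMinOn hKne hg_cont.continuousOn
  set δ : ℝ := g w0 with hδ_def
  have hδpos : 0 < δ := hg_pos w0
  have hδall : ∀ z : ZCover f₀, δ ≤ g z := by
    intro z
    obtain ⟨w, hwK, hwg⟩ := hred z
    rw [← hwg]
    exact hw0min hwK
  -- growth along the flow
  have hup : ∀ (y : ZCover f₀) (n : ℕ), F y + n * δ ≤ F (ψ n y) := by
    intro y n
    induction n with
    | zero => simp [hψ0]
    | succ n ih =>
      have h1 : δ ≤ F (ψ 1 (ψ n y)) - F (ψ n y) := hδall (ψ (n : ℝ) y)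
      have h2 : ψ ((n : ℕ) + 1 : ℝ) y = ψ 1 (ψ n y) := by
        rw [show ((n : ℕ) + 1 : ℝ) = 1 + (n : ℝ) by ring, hψadd]
      push_cast
      rw [h2]
      linarith
  have hdown : ∀ (y : ZCover f₀) (n : ℕ), F (ψ (-(n : ℝ)) y) ≤ F y - n * δ := by
    intro y n
    induction n with
    | zero => simp [hψ0]
    | succ n ih =>
      have h1 : δ ≤ F (ψ 1 (ψ (-((n:ℝ)+1)) y)) - F (ψ (-((n:ℝ)+1)) y) :=
        hδall (ψ (-((n:ℝ)+1)) y)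
      have h2 : ψ 1 (ψ (-((n:ℝ)+1)) y) = ψ (-(n:ℝ)) y := by
        rw [← hψadd]; norm_num
      rw [h2] at h1
      push_cast
      linarith
  -- existence
  have hex : ∀ (y : ZCover f₀) (c : ℝ), ∃ s : ℝ, F (ψ s y) = c := by
    intro y c
    obtain ⟨n1, hn1⟩ := exists_nat_ge ((c - F y) / δ)
    obtain ⟨n2, hn2⟩ := exists_nat_ge ((F y - c) / δ)
    have hb : c ≤ F (ψ (n1 : ℝ) y) := by
      have := hup y n1
      have h' : c - F y ≤ n1 * δ := by
        rw [div_le_iff₀ hδpos] at hn1; linarith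
      linarith
    have ha : F (ψ (-(n2 : ℝ)) y) ≤ c := by
      have := hdown y n2
      have h' : F y - c ≤ n2 * δ := by
        rw [div_le_iff₀ hδpos] at hn2; linarith
      linarith
    have hab : (-(n2:ℝ)) ≤ (n1:ℝ) := le_trans (neg_nonpos.mpr (Nat.cast_nonneg n2)) (Nat.cast_nonneg n1)
    have := intermediate_value_Icc hab (hcont y).continuousOn
    obtain ⟨s, -, hs⟩ := this ⟨ha, hb⟩
    exact ⟨s, hs⟩
  refine ⟨fun y c => ?_, fun c x => ?_⟩
  · obtain ⟨s, hs⟩ := hex y c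
    exact ⟨s, hs, fun s' hs' => huniq y c s' s hs' hs⟩
  · obtain ⟨t, ht⟩ : ∃ t : ℝ, (t : AddCircle (1:ℝ)) = f₀ x := Quotient.exists_rep (f₀ x)
    obtain ⟨s, hs⟩ := hex ⟨(x, t), ht.symm⟩ c
    refine ⟨s, ψ s ⟨(x, t), ht.symm⟩, hs, ?_⟩
    rw [hlift]
    rfl
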